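/- Let E be the incidence matrix of a (n,k,γ,δ,λ)-BIBD and let the assignment matrix be A = E^T ∈ ℝ^{k×n}. Let B be the random-diagonal encoding matrix built from A with parameter ε = 0 (so the diagonal entries of D_1,…,D_m are i.i.d. uniform on {−1,+1}). Then for every non-straggler set 𝓕 ⊆ {1,…,n} with |𝓕| = n−s, the expected approximation error satisfies E[Err_𝓕(B)] ≤ mk − mδ²(n−s)/(mδ + (n−s−1)λ). -/

import Mathlib

open MeasureTheory Matrix

noncomputable section

/-- The set `S = [1-ε, 1+ε] ∪ [-1-ε, -1+ε]`. -/
def Sset (ε : ℝ) : Set ℝ := Set.Icc (1 - ε) (1 + ε) ∪ Set.Icc (-1 - ε) (-1 + ε)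

/-- The uniform probability distribution on `Sset ε`; for `ε = 0` this is the uniform
distribution on `{-1, 1}`. -/
noncomputable def uniformS (ε : ℝ) : Measure ℝ :=
  if ε = 0 then (2 : ENNReal)⁻¹ • (Measure.dirac (1 : ℝ) + Measure.dirac (-1 : ℝ))
  else (volume (Sset ε))⁻¹ • volume.restrict (Sset ε)

/-- Joint law of the diagonal entries of the i.i.d. random diagonal matrices
`D_1, …, D_m` (the entry of `D_i` at position `j` is `d (i, j)`). -/
noncomputable def μD (m : ℕ) (ν : Type*) [Fintype ν] (ε : ℝ) :
    Measure ((Fin m × ν) → ℝ) :=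
  Measure.pi fun _ => uniformS ε

/-- Random-diagonal encoding matrix: the vertical stack of `A * D_1, …, A * D_m`,
with rows indexed by `Fin m × κ` (block `i`, row `r`). -/
def encB {m : ℕ} {κ ν : Type*} (A : Matrix κ ν ℝ) (d : (Fin m × ν) → ℝ) :
    Matrix (Fin m × κ) ν ℝ :=
  Matrix.of fun p j => A p.2 j * d (p.1, j)

/-- The target matrix `F = [f_1 | … | f_m]`, where `f_i` is `1` on the `i`-th block. -/
def Fmat (m : ℕ) (κ : Type*) : Matrix (Fin m × κ) (Fin m) ℝ :=
  Matrix.of fun p i => if p.1 = i then 1 else 0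

/-- Column submatrix corresponding to the non-straggler set `𝓕`. -/
def subCols {α ν : Type*} (M : Matrix α ν ℝ) (𝓕 : Finset ν) : Matrix α ↥𝓕 ℝ :=
  M.submatrix id (fun j => (j : ν))

/-- Squared Frobenius norm. -/
def frobSq {α β : Type*} [Fintype α] [Fintype β] (M : Matrix α β ℝ) : ℝ :=
  ∑ i, ∑ j, (M i j) ^ 2

/-- The approximation error `Err_𝓕(B) = inf_R ‖B_𝓕 R − F‖_F²`. -/
noncomputable def err {m : ℕ} {κ ν : Type*} [Fintype κ] [Fintype ν]
    (B : Matrix (Fin m × κ) ν ℝ) (𝓕 : Finset ν) : ℝ :=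
  ⨅ R : Matrix ↥𝓕 (Fin m) ℝ, frobSq (subCols B 𝓕 * R - Fmat m κ)

lemma uniformS0_eq : uniformS 0 = (2 : ENNReal)⁻¹ • (Measure.dirac (1 : ℝ) + Measure.dirac (-1 : ℝ)) := if_pos rfl

lemma integrable_dirac'' {f : ℝ → ℝ} (hf : Measurable f) (a : ℝ) : Integrable f (Measure.dirac a) := by
  refine ⟨hf.aestronglyMeasurable, ?_⟩
  rw [HasFiniteIntegral, lintegral_dirac]
  exact ENNReal.coe_lt_top

lemma integrable_uniformS0 {f : ℝ → ℝ} (hf : Measurable f) : Integrable f (uniformS 0) := by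
  rw [uniformS0_eq]
  refine Integrable.smul_measure ?_ (by norm_num)
  rw [integrable_add_measure]
  exact ⟨integrable_dirac'' hf 1, integrable_dirac'' hf (-1)⟩

lemma integral_uniformS0 {f : ℝ → ℝ} (hf : Measurable f) :
    ∫ t, f t ∂(uniformS 0) = (f 1 + f (-1)) / 2 := by
  rw [uniformS0_eq, integral_smul_measure,
    integral_add_measure (integrable_dirac'' hf 1) (integrable_dirac'' hf (-1)),
    integral_dirac, integral_dirac]
  simp [ENNReal.toReal_inv]
  ring

instance : IsProbabilityMeasure (uniformS 0) := by
  constructor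
  rw [uniformS0_eq]
  simp [Measure.add_apply]
  rw [← two_mul, ENNReal.mul_inv_cancel] <;> norm_num

lemma integral_pow_uniformS0 (e : ℕ) :
    ∫ t, t ^ e ∂(uniformS 0) = if Even e then 1 else 0 := by
  rw [integral_uniformS0 (f := fun t => t ^ e) (measurable_id.pow_const e)]
  rcases Nat.even_or_odd e with h | h
  · simp [h, h.neg_one_pow]
  · simp [h, Nat.not_even_iff_odd.2 h, h.neg_one_pow]

def R0 : Type := ℝ
instance : MeasurableSpace R0 := Real.measurableSpace
instance : MeasureSpace R0 := ⟨uniformS 0⟩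
instance : IsProbabilityMeasure (volume : Measure R0) :=
  (inferInstance : IsProbabilityMeasure (uniformS 0))
instance : SigmaFinite (volume : Measure R0) :=
  by infer_instance

lemma integral_monomial (m n : ℕ) (e : Fin m × Fin n → ℕ) :
    ∫ d, ∏ p, (d p) ^ (e p) ∂(μD m (Fin n) 0) = ∏ p, (if Even (e p) then (1:ℝ) else 0) := by
  have h := MeasureTheory.integral_fintype_prod_eq_prod (ι := Fin m × Fin n)
    (E := fun _ => R0) (μ := fun _ => (volume : Measure R0)) (fun p (t : R0) => (show ℝ from t) ^ (e p))
  have h2 : ∫ d, ∏ p, (d p) ^ (e p) ∂(μD m (Fin n) 0)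
      = ∫ x : (Fin m × Fin n) → R0, ∏ p, (show ℝ from x p) ^ (e p) := rfl
  rw [h2]; refine h.trans ?_
  exact Finset.prod_congr rfl fun p _ => integral_pow_uniformS0 (e p)

lemma integrable_monomial (m n : ℕ) (e : Fin m × Fin n → ℕ) :
    Integrable (fun d => ∏ p, (d p) ^ (e p)) (μD m (Fin n) 0) := by
  have h := MeasureTheory.Integrable.fintype_prod (ι := Fin m × Fin n) (E := R0) (μ := fun _ => (volume : Measure R0))
    (f := fun p (t : R0) => (show ℝ from t) ^ (e p))
    (fun p => integrable_uniformS0 (measurable_id.pow_const (e p)))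
  exact h

section mono
variable {P : Type*} [Fintype P] [DecidableEq P]

lemma prodIndic (d : P → ℝ) (q : P) :
    ∏ p, d p ^ (if p = q then 1 else 0) = d q := by
  rw [Finset.prod_eq_single q (fun p _ hp => by simp [hp]) (by simp)]
  simp

lemma mono_two (d : P → ℝ) (p₁ p₂ : P) :
    d p₁ * d p₂ = ∏ p, d p ^ ((if p = p₁ then 1 else 0) + (if p = p₂ then 1 else 0)) := by
  simp_rw [pow_add, Finset.prod_mul_distrib, prodIndic]

lemma mono_four (d : P → ℝ) (p₁ p₂ p₃ p₄ : P) :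
    d p₁ * d p₂ * (d p₃ * d p₄) = ∏ p, d p ^
      ((if p = p₁ then 1 else 0) + (if p = p₂ then 1 else 0)
        + ((if p = p₃ then 1 else 0) + (if p = p₄ then 1 else 0))) := by
  simp_rw [pow_add, Finset.prod_mul_distrib, prodIndic]

lemma prod_even_ite (e : P → ℕ) :
    ∏ p, (if Even (e p) then (1:ℝ) else 0) = if ∀ p, Even (e p) then 1 else 0 := by
  by_cases h : ∀ p, Even (e p)
  · simp [h]
  · rw [if_neg h]
    push_neg at h
    obtain ⟨p, hp⟩ := h
    exact Finset.prod_eq_zero (Finset.mem_univ p) (by simp [hp])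
end mono

lemma int_pair (m n : ℕ) (p₁ p₂ : Fin m × Fin n) :
    ∫ d, d p₁ * d p₂ ∂(μD m (Fin n) 0) = if p₁ = p₂ then 1 else 0 := by
  simp_rw [mono_two _ p₁ p₂]
  rw [integral_monomial, prod_even_ite]
  by_cases h : p₁ = p₂
  · subst h
    rw [if_pos rfl, if_pos]
    intro p
    by_cases hp : p = p₁ <;> simp [hp]
  · rw [if_neg h, if_neg]
    intro hall
    have := hall p₁
    simp [h] at this

lemma integrable_pair (m n : ℕ) (p₁ p₂ : Fin m × Fin n) :
    Integrable (fun d => d p₁ * d p₂) (μD m (Fin n) 0) := by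
  simp_rw [mono_two _ p₁ p₂]
  exact integrable_monomial m n _

lemma int_quad (m n : ℕ) (i' i : Fin m) (j j' : Fin n) :
    ∫ d, d (i', j) * d (i, j) * (d (i', j') * d (i, j')) ∂(μD m (Fin n) 0)
      = if i' = i ∨ j = j' then 1 else 0 := by
  simp_rw [mono_four _ (i', j) (i, j) (i', j') (i, j')]
  rw [integral_monomial, prod_even_ite]
  by_cases h : i' = i ∨ j = j'
  · rw [if_pos h, if_pos]
    intro p
    rcases h with h | h
    · subst h
      exact ⟨(if p = (i', j) then 1 else 0) + (if p = (i', j') then 1 else 0), by ring⟩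
    · subst h
      exact ⟨(if p = (i', j) then 1 else 0) + (if p = (i, j) then 1 else 0), by ring⟩
  · rw [if_neg h, if_neg]
    push_neg at h
    obtain ⟨hi, hj⟩ := h
    intro hall
    have := hall (i', j)
    have e1 : (i', j) ≠ (i, j) := by simp [hi]
    have e2 : (i', j) ≠ (i', j') := by simp [hj]
    have e3 : (i', j) ≠ (i, j') := by simp [hi]
    simp [e1, e2, e3] at this

lemma integrable_quad (m n : ℕ) (i' i : Fin m) (j j' : Fin n) :
    Integrable (fun d => d (i', j) * d (i, j) * (d (i', j') * d (i, j'))) (μD m (Fin n) 0) := by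
  simp_rw [mono_four _ (i', j) (i, j) (i', j') (i, j')]
  exact integrable_monomial m n _

instance (m : ℕ) (ν : Type*) [Fintype ν] : IsProbabilityMeasure (μD m ν 0) := by
  unfold μD; infer_instance

variable {m n : ℕ} {𝓕 : Finset (Fin n)} {w : ↥𝓕 → ℝ}

def Sfun (m : ℕ) {n : ℕ} (𝓕 : Finset (Fin n)) (w : ↥𝓕 → ℝ) (i' i : Fin m) :
    ((Fin m × Fin n) → ℝ) → ℝ :=
  fun d => ∑ j : ↥𝓕, w j * (d (i', ↑j) * d (i, ↑j))

lemma S_integrable (i' i : Fin m) : Integrable (Sfun m 𝓕 w i' i) (μD m (Fin n) 0) :=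
  integrable_finset_sum _ fun j _ => (integrable_pair m n (i', ↑j) (i, ↑j)).const_mul (w j)

lemma S_int (i' i : Fin m) :
    ∫ d, Sfun m 𝓕 w i' i d ∂(μD m (Fin n) 0) = if i' = i then ∑ j : ↥𝓕, w j else 0 := by
  unfold Sfun
  rw [integral_finset_sum (μ := μD m (Fin n) 0) Finset.univ
    (f := fun (j : ↥𝓕) (d : (Fin m × Fin n) → ℝ) => w j * (d (i', ↑j) * d (i, ↑j)))
    (fun j _ => (integrable_pair m n (i', ↑j) (i, ↑j)).const_mul (w j))]
  simp_rw [MeasureTheory.integral_const_mul, int_pair, Prod.mk.injEq, and_true, mul_ite, mul_one, mul_zero]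
  by_cases h : i' = i <;> simp [h]

lemma Ssq_eq (i' i : Fin m) (d : (Fin m × Fin n) → ℝ) :
    (Sfun m 𝓕 w i' i d) ^ 2 = ∑ j : ↥𝓕, ∑ j' : ↥𝓕,
      (w j * w j') * (d (i', ↑j) * d (i, ↑j) * (d (i', ↑j') * d (i, ↑j'))) := by
  rw [sq, Sfun, Finset.sum_mul_sum]
  exact Finset.sum_congr rfl fun j _ => Finset.sum_congr rfl fun j' _ => by ring

lemma Ssq_integrable (i' i : Fin m) :
    Integrable (fun d => (Sfun m 𝓕 w i' i d) ^ 2) (μD m (Fin n) 0) := by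
  simp_rw [Ssq_eq]
  exact integrable_finset_sum _ fun j _ => integrable_finset_sum _ fun j' _ =>
    (integrable_quad m n i' i ↑j ↑j').const_mul _

lemma Ssq_int (hw : ∀ j, w j = 0 ∨ w j = 1) (i' i : Fin m) :
    ∫ d, (Sfun m 𝓕 w i' i d) ^ 2 ∂(μD m (Fin n) 0)
      = if i' = i then (∑ j : ↥𝓕, w j) ^ 2 else ∑ j : ↥𝓕, w j := by
  simp_rw [Ssq_eq]
  rw [integral_finset_sum (μ := μD m (Fin n) 0) Finset.univ
    (f := fun (j : ↥𝓕) (d : (Fin m × Fin n) → ℝ) =>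
      ∑ j' : ↥𝓕, (w j * w j') * (d (i', ↑j) * d (i, ↑j) * (d (i', ↑j') * d (i, ↑j'))))
    (fun j _ => integrable_finset_sum _ fun j' _ =>
      (integrable_quad m n i' i ↑j ↑j').const_mul _)]
  have hinner : ∀ j : ↥𝓕, ∫ d, ∑ j' : ↥𝓕,
      (w j * w j') * (d (i', ↑j) * d (i, ↑j) * (d (i', ↑j') * d (i, ↑j'))) ∂(μD m (Fin n) 0)
      = ∑ j' : ↥𝓕, (w j * w j') * (if i' = i ∨ (↑j : Fin n) = ↑j' then 1 else 0) := by
    intro j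
    rw [integral_finset_sum (μ := μD m (Fin n) 0) Finset.univ
      (f := fun (j' : ↥𝓕) (d : (Fin m × Fin n) → ℝ) =>
        (w j * w j') * (d (i', ↑j) * d (i, ↑j) * (d (i', ↑j') * d (i, ↑j'))))
      (fun j' _ => (integrable_quad m n i' i ↑j ↑j').const_mul _)]
    simp_rw [MeasureTheory.integral_const_mul, int_quad]
  simp_rw [hinner]
  by_cases h : i' = i
  · simp only [h, true_or, if_true, mul_one, sq, Finset.sum_mul_sum]
  · simp only [h, false_or, if_false]
    simp_rw [Subtype.coe_inj, mul_ite, mul_one, mul_zero, Finset.sum_ite_eq,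
      Finset.mem_univ, if_true]
    exact Finset.sum_congr rfl fun j _ => by rcases hw j with h0 | h0 <;> rw [h0] <;> ring

lemma term_eq (c b : ℝ) (i' i : Fin m) :
    (fun d : (Fin m × Fin n) → ℝ => (c * Sfun m 𝓕 w i' i d - b) ^ 2)
      = fun d => c ^ 2 * (Sfun m 𝓕 w i' i d) ^ 2 - 2 * c * b * Sfun m 𝓕 w i' i d + b ^ 2 :=
  funext fun d => by ring

lemma term_integrable (c b : ℝ) (i' i : Fin m) :
    Integrable (fun d : (Fin m × Fin n) → ℝ => (c * Sfun m 𝓕 w i' i d - b) ^ 2)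
      (μD m (Fin n) 0) := by
  rw [term_eq]
  exact (((Ssq_integrable i' i).const_mul (c ^ 2)).sub
    ((S_integrable i' i).const_mul (2 * c * b))).add (integrable_const _)

lemma term_int (hw : ∀ j, w j = 0 ∨ w j = 1) (c : ℝ) (i' i : Fin m) :
    ∫ d, (c * Sfun m 𝓕 w i' i d - (if i' = i then (1:ℝ) else 0)) ^ 2 ∂(μD m (Fin n) 0)
      = if i' = i
        then c ^ 2 * (∑ j : ↥𝓕, w j) ^ 2 - 2 * c * (∑ j : ↥𝓕, w j) + 1
        else c ^ 2 * (∑ j : ↥𝓕, w j) := by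
  have h : ∫ d, (c * Sfun m 𝓕 w i' i d - (if i' = i then (1:ℝ) else 0)) ^ 2 ∂(μD m (Fin n) 0)
      = ∫ d, (c ^ 2 * (Sfun m 𝓕 w i' i d) ^ 2
          - 2 * c * (if i' = i then (1:ℝ) else 0) * Sfun m 𝓕 w i' i d
          + (if i' = i then (1:ℝ) else 0) ^ 2) ∂(μD m (Fin n) 0) := by
    exact congrArg _ (term_eq c _ i' i)
  rw [h, integral_add, integral_sub, MeasureTheory.integral_const_mul,
    MeasureTheory.integral_const_mul, integral_const, S_int, Ssq_int hw]
  · simp only [probReal_univ, one_smul]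
    by_cases hii : i' = i <;> simp [hii] <;> ring
  · exact (Ssq_integrable i' i).const_mul _
  · exact (S_integrable i' i).const_mul _
  · exact ((Ssq_integrable i' i).const_mul _).sub ((S_integrable i' i).const_mul _)
  · exact integrable_const _

/-- Corollary 1: expected-error upper bound for the random-diagonal
construction (`ε = 0`) with the transpose of a `(n,k,γ,δ,lam)`-BIBD incidence matrix. -/
theorem stmt1 (n k m s γ δ lam : ℕ) (hm : 0 < m) (hs : s ≤ n)
    (E : Matrix (Fin n) (Fin k) ℝ)
    (hbin : ∀ i j, E i j = 0 ∨ E i j = 1)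
    (hγ : ∀ j, ∑ i, E i j = (γ : ℝ))
    (hδ : ∀ i, ∑ j, E i j = (δ : ℝ))
    (hlam : ∀ i i', i ≠ i' → ∑ j, E i j * E i' j = (lam : ℝ))
    (hδlam : lam < δ)
    (𝓕 : Finset (Fin n)) (hcard : 𝓕.card = n - s) :
    ∫ d, err (encB Eᵀ d) 𝓕 ∂(μD m (Fin n) 0) ≤
      (m : ℝ) * k -
        (m : ℝ) * (δ : ℝ) ^ 2 * ((n : ℝ) - s) /
          ((m : ℝ) * δ + ((n : ℝ) - s - 1) * lam) := by
  -- notation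
  set N : ℝ := ((𝓕.card : ℕ) : ℝ) with hNdef
  have hN : N = (n : ℝ) - s := by
    rw [hNdef, hcard, Nat.cast_sub hs]
  set Q : ℝ := (m : ℝ) * δ + (N - 1) * lam with hQdef
  have hδ1 : (1 : ℝ) ≤ (δ : ℝ) := by
    have : 1 ≤ δ := Nat.one_le_iff_ne_zero.2 (by omega)
    exact_mod_cast this
  have hm1 : (1 : ℝ) ≤ (m : ℝ) := by exact_mod_cast hm
  have hlamδ : (lam : ℝ) + 1 ≤ (δ : ℝ) := by exact_mod_cast hδlam
  have hNnn : 0 ≤ N := by positivity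
  have hlamnn : (0:ℝ) ≤ lam := by positivity
  have hQpos : 0 < Q := by
    rw [hQdef]
    nlinarith
  set c : ℝ := (δ : ℝ) / Q with hcdef
  -- the weight functions
  set w : Fin k → ↥𝓕 → ℝ := fun r j => E ↑j r with hwdef
  have hw : ∀ r j, w r j = 0 ∨ w r j = 1 := fun r j => hbin ↑j r
  set T : Fin k → ℝ := fun r => ∑ j : ↥𝓕, w r j with hTdef
  -- the comparison function
  set g : ((Fin m × Fin n) → ℝ) → ℝ := fun d =>
    ∑ i' : Fin m, ∑ r : Fin k, ∑ i : Fin m,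
      (c * Sfun m 𝓕 (w r) i' i d - (if i' = i then (1:ℝ) else 0)) ^ 2 with hgdef
  -- pointwise: 0 ≤ err and err ≤ g
  have hfrob_nonneg : ∀ (M : Matrix (Fin m × Fin k) (Fin m) ℝ), 0 ≤ frobSq M := by
    intro M
    exact Finset.sum_nonneg fun i _ => Finset.sum_nonneg fun j _ => sq_nonneg _
  have herr_nonneg : ∀ d, 0 ≤ err (encB Eᵀ d) 𝓕 :=
    fun d => le_ciInf fun R => hfrob_nonneg _
  have herr_le : ∀ d, err (encB Eᵀ d) 𝓕 ≤ g d := by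
    intro d
    have hb : BddBelow (Set.range fun R : Matrix ↥𝓕 (Fin m) ℝ =>
        frobSq (subCols (encB Eᵀ d) 𝓕 * R - Fmat m (Fin k))) := by
      refine ⟨0, ?_⟩
      rintro x ⟨R, rfl⟩
      exact hfrob_nonneg _
    have hle := ciInf_le hb (Matrix.of fun (j : ↥𝓕) (i : Fin m) => c * d (i, ↑j))
    refine hle.trans_eq ?_
    rw [hgdef]
    unfold frobSq
    rw [Fintype.sum_prod_type]
    refine Finset.sum_congr rfl fun i' _ => Finset.sum_congr rfl fun r _ =>
      Finset.sum_congr rfl fun i _ => ?_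
    congr 1
    simp only [Matrix.sub_apply, Matrix.mul_apply, subCols, encB, Fmat, Matrix.submatrix_apply,
      Matrix.of_apply, Matrix.transpose_apply, id_eq, Sfun]
    rw [Finset.mul_sum]
    congr 1
    exact Finset.sum_congr rfl fun j _ => by ring
  -- integrability of g
  have hg_int : Integrable g (μD m (Fin n) 0) := by
    rw [hgdef]
    exact integrable_finset_sum _ fun i' _ => integrable_finset_sum _ fun r _ =>
      integrable_finset_sum _ fun i _ => term_integrable c _ i' i
  -- the integral of g
  have hT1 : ∑ r : Fin k, T r = N * δ := by
    rw [hTdef]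
    simp only
    rw [Finset.sum_comm]
    have : ∀ j : ↥𝓕, ∑ r : Fin k, w r j = (δ : ℝ) := fun j => hδ ↑j
    rw [Finset.sum_congr rfl fun j _ => this j, Finset.sum_const, Finset.card_univ,
      Fintype.card_coe, nsmul_eq_mul]
  have hT2 : ∑ r : Fin k, (T r) ^ 2 = N * δ + N * (N - 1) * lam := by
    have hTsq : ∀ r : Fin k, (T r) ^ 2 = ∑ j : ↥𝓕, ∑ j' : ↥𝓕, w r j * w r j' := by
      intro r
      rw [hTdef]
      simp only
      rw [sq, Finset.sum_mul_sum]
    rw [Finset.sum_congr rfl fun r _ => hTsq r, Finset.sum_comm]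
    have hswap : ∀ j : ↥𝓕, ∑ r : Fin k, ∑ j' : ↥𝓕, w r j * w r j'
        = ∑ j' : ↥𝓕, ∑ r : Fin k, w r j * w r j' := by
      intro j; rw [Finset.sum_comm]
    rw [Finset.sum_congr rfl fun j _ => hswap j]
    have hinner : ∀ j j' : ↥𝓕, ∑ r : Fin k, w r j * w r j'
        = if j = j' then (δ : ℝ) else lam := by
      intro j j'
      by_cases h : j = j'
      · subst h
        rw [if_pos rfl]
        rw [← hδ ↑j]
        refine Finset.sum_congr rfl fun r _ => ?_
        rcases hbin ↑j r with h0 | h0 <;> rw [hwdef] <;> simp only <;> rw [h0] <;> ring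
      · rw [if_neg h]
        exact hlam ↑j ↑j' (fun hc => h (Subtype.coe_injective hc))
    rw [Finset.sum_congr rfl fun j _ => Finset.sum_congr rfl fun j' _ => hinner j j']
    have hrow : ∀ j : ↥𝓕, ∑ j' : ↥𝓕, (if j = j' then (δ:ℝ) else lam)
        = N * lam + ((δ:ℝ) - lam) := by
      intro j
      have hsplit : ∀ j' : ↥𝓕, (if j = j' then (δ:ℝ) else lam)
          = lam + (if j = j' then (δ:ℝ) - lam else 0) := by
        intro j'; by_cases h : j = j' <;> simp [h]
      rw [Finset.sum_congr rfl fun j' _ => hsplit j', Finset.sum_add_distrib,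
        Finset.sum_const, Finset.sum_ite_eq]
      simp only [Finset.mem_univ, if_true, Finset.card_univ, Fintype.card_coe,
        nsmul_eq_mul, hNdef]
    rw [Finset.sum_congr rfl fun j _ => hrow j, Finset.sum_const, Finset.card_univ,
      Fintype.card_coe, nsmul_eq_mul]
    push_cast
    ring
  -- integral of g
  have hint_g : ∫ d, g d ∂(μD m (Fin n) 0)
      = ∑ i' : Fin m, ∑ r : Fin k, ∑ i : Fin m,
        (if i' = i then c ^ 2 * (T r) ^ 2 - 2 * c * T r + 1 else c ^ 2 * T r) := by
    rw [hgdef]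
    rw [integral_finset_sum _ (fun i' _ => integrable_finset_sum _ fun r _ =>
      integrable_finset_sum _ fun i _ => term_integrable c _ i' i)]
    refine Finset.sum_congr rfl fun i' _ => ?_
    rw [integral_finset_sum _ (fun r _ => integrable_finset_sum _ fun i _ =>
      term_integrable c _ i' i)]
    refine Finset.sum_congr rfl fun r _ => ?_
    rw [integral_finset_sum _ (fun i _ => term_integrable c _ i' i)]
    refine Finset.sum_congr rfl fun i _ => ?_
    rw [term_int (hw r) c i' i]
  have hsum_i : ∀ (i' : Fin m) (X Y : ℝ), (∑ i : Fin m, (if i' = i then X else Y))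
      = Y * m + (X - Y) := by
    intro i' X Y
    have hspl : ∀ i : Fin m, (if i' = i then X else Y) = Y + (if i' = i then X - Y else 0) := by
      intro i; by_cases h : i' = i <;> simp [h]
    rw [Finset.sum_congr rfl fun i _ => hspl i, Finset.sum_add_distrib, Finset.sum_const,
      Finset.sum_ite_eq]
    simp [Finset.card_univ, mul_comm]
  set A : ℝ := c ^ 2 * m - c ^ 2 - 2 * c with hAdef
  have hre : ∀ (i' : Fin m) (r : Fin k), (∑ i : Fin m,
      (if i' = i then c ^ 2 * (T r) ^ 2 - 2 * c * T r + 1 else c ^ 2 * T r))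
      = A * T r + c ^ 2 * (T r) ^ 2 + 1 := by
    intro i' r
    rw [hsum_i i' _ _, hAdef]
    ring
  have hlin : (∑ r : Fin k, (A * T r + c ^ 2 * (T r) ^ 2 + 1))
      = A * (N * δ) + c ^ 2 * (N * δ + N * (N - 1) * lam) + k := by
    rw [Finset.sum_add_distrib, Finset.sum_add_distrib, ← Finset.mul_sum, ← Finset.mul_sum,
      Finset.sum_const, Finset.card_univ, Fintype.card_fin, nsmul_eq_mul, hT1, hT2, mul_one]
  have htot : ∫ d, g d ∂(μD m (Fin n) 0)
      = m * (A * (N * δ) + c ^ 2 * (N * δ + N * (N - 1) * lam) + k) := by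
    rw [hint_g, Finset.sum_congr rfl fun i' _ => Finset.sum_congr rfl fun r _ => hre i' r,
      Finset.sum_congr rfl fun i' _ => hlin, Finset.sum_const, Finset.card_univ,
      Fintype.card_fin, nsmul_eq_mul]
  have hfinal : (m : ℝ) * (A * (N * δ) + c ^ 2 * (N * δ + N * (N - 1) * lam) + k)
      = m * k - m * (δ:ℝ) ^ 2 * N / Q := by
    rw [hAdef, hcdef]
    field_simp
    rw [hQdef]
    ring
  calc ∫ d, err (encB Eᵀ d) 𝓕 ∂(μD m (Fin n) 0)
      ≤ ∫ d, g d ∂(μD m (Fin n) 0) :=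
        integral_mono_of_nonneg (Filter.Eventually.of_forall herr_nonneg) hg_int
          (Filter.Eventually.of_forall herr_le)
    _ = m * k - m * (δ:ℝ) ^ 2 * N / Q := by rw [htot, hfinal]
    _ = (m : ℝ) * k - (m : ℝ) * (δ : ℝ) ^ 2 * ((n : ℝ) - s) /
          ((m : ℝ) * δ + ((n : ℝ) - s - 1) * lam) := by rw [hQdef, hN]
end
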